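/- arXiv:0706.1808 — 4 statements merged into one kernel-verified Lean document; each statement's English description precedes it below -/
import Mathlib

section
/- For every n-dimensional centrally symmetric convex body C, γ(C) = ρ(C) + 1, where γ(C) is the smallest r such that some translative packing C+X satisfies E^n = rC + X, and ρ(C) is the largest r such that every translative packing C+X admits a translate of rC with interior disjoint from all translates in C+X. -/
open Pointwise Set

noncomputable section

/-- `C + X` is a translative packing: the translates have pairwise disjoint interiors. -/
def IsPacking {V : Type*} [NormedAddCommGroup V] [NormedSpace ℝ V] (C X : Set V) : Prop :=
  X.Pairwise fun x y => Disjoint (interior (C + {x})) (interior (C + {y}))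

/-- `D + X` covers the whole space. -/
def IsCovering {V : Type*} [NormedAddCommGroup V] [NormedSpace ℝ V] (D X : Set V) : Prop :=
  ⋃ x ∈ X, (D + {x}) = Set.univ

/-- γ(C): the smallest `r > 0` such that some translative packing `C + X`
satisfies `ℝⁿ = rC + X`. -/
def gamma {V : Type*} [NormedAddCommGroup V] [NormedSpace ℝ V] (C : Set V) : ℝ :=
  sInf {r : ℝ | 0 < r ∧ ∃ X : Set V, IsPacking C X ∧ IsCovering (r • C) X}

/-- ρ(C): the largest `r > 0` such that every translative packing `C + X` admits a
translate of `rC` whose interior is disjoint from all translates `C + x`, `x ∈ X`. -/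
def rho {V : Type*} [NormedAddCommGroup V] [NormedSpace ℝ V] (C : Set V) : ℝ :=
  sSup {r : ℝ | 0 < r ∧ ∀ X : Set V, IsPacking C X →
    ∃ y : V, ∀ x ∈ X, Disjoint (interior (r • C + {y})) (C + {x})}

namespace GammaRhoAux

variable {V : Type*} [NormedAddCommGroup V] [NormedSpace ℝ V] {C : Set V}

lemma memAddSingleton {S : Set V} {x p : V} : p ∈ S + {x} ↔ p - x ∈ S := by
  rw [Set.add_singleton]
  constructor
  · rintro ⟨a, ha, rfl⟩; simpa
  · intro h; exact ⟨p - x, h, sub_add_cancel p x⟩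

lemma intAddSingleton (S : Set V) (x : V) : interior (S + {x}) = interior S + {x} := by
  rw [Set.add_singleton, Set.add_singleton]
  exact ((Homeomorph.addRight x).image_interior S).symm

lemma negSmulSet (hsymm : C = -C) (t : ℝ) : t • C = -(t • C) := by
  nth_rewrite 1 [hsymm]
  exact Set.smul_set_neg t C

lemma negIntSmul (hsymm : C = -C) (t : ℝ) :
    -(interior (t • C)) = interior (t • C) := by
  have h2 : -(interior (t • C)) = interior (-(t • C)) := by
    have := (Homeomorph.neg V).image_interior (t • C)
    simpa [Set.image_neg] using this
  rw [h2, ← negSmulSet hsymm]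

lemma negInt (hsymm : C = -C) : -(interior C) = interior C := by
  have := negIntSmul hsymm (C := C) 1
  simpa [one_smul] using this

lemma zeroMemInt (hconv : Convex ℝ C) (hint : (interior C).Nonempty) (hsymm : C = -C) :
    0 ∈ interior C := by
  obtain ⟨v, hv⟩ := hint
  have hneg : -v ∈ interior C := by
    rw [← negInt hsymm]
    exact Set.neg_mem_neg.2 hv
  have := (hconv.interior) hv hneg (by norm_num : (0:ℝ) ≤ 1/2) (by norm_num : (0:ℝ) ≤ 1/2)
    (by norm_num)
  simpa using this

lemma smulSubInt (hconv : Convex ℝ C) (h0 : 0 ∈ interior C) {t r : ℝ}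
    (ht : 0 ≤ t) (htr : t < r) : t • C ⊆ interior (r • C) := by
  have hr : 0 < r := lt_of_le_of_lt ht htr
  have h0r : (0 : V) ∈ interior (r • C) := by
    rw [interior_smul₀ (ne_of_gt hr)]
    simpa using smul_mem_smul_set (a := r) h0
  rintro u ⟨c, hc, rfl⟩
  have key := (hconv.smul r).combo_interior_closure_mem_interior
    (x := (0:V)) (y := r • c) h0r (subset_closure (smul_mem_smul_set hc))
    (a := 1 - t/r) (b := t/r)
    (by have : t/r < 1 := (div_lt_one hr).2 htr; linarith)
    (div_nonneg ht hr.le) (by ring)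
  simpa [smul_smul, div_mul_cancel₀ _ (ne_of_gt hr)] using key

lemma smulSubIntC (hconv : Convex ℝ C) (h0 : 0 ∈ interior C) {t : ℝ}
    (ht : 0 ≤ t) (ht1 : t < 1) : t • C ⊆ interior C := by
  have := smulSubInt hconv h0 ht ht1
  rwa [one_smul] at this

lemma twoSmul (hconv : Convex ℝ C) : (2 : ℝ) • C = C + C := by
  rw [show (2:ℝ) = 1 + 1 by norm_num, hconv.add_smul zero_le_one zero_le_one, one_smul]

end GammaRhoAux

open GammaRhoAux

theorem gamma_eq_rho_add_one (n : ℕ) (hn : 0 < n) (C : Set (EuclideanSpace ℝ (Fin n)))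
    (hcpt : IsCompact C) (hconv : Convex ℝ C) (hint : (interior C).Nonempty)
    (hsymm : C = -C) :
    gamma C = rho C + 1 := by
  unfold gamma rho
  set A : Set ℝ :=
    {r : ℝ | 0 < r ∧ ∃ X : Set (EuclideanSpace ℝ (Fin n)),
      IsPacking C X ∧ IsCovering (r • C) X} with hA
  set B : Set ℝ :=
    {r : ℝ | 0 < r ∧ ∀ X : Set (EuclideanSpace ℝ (Fin n)), IsPacking C X →
      ∃ y, ∀ x ∈ X, Disjoint (interior (r • C + {y})) (C + {x})} with hB
  have h0 : (0 : EuclideanSpace ℝ (Fin n)) ∈ interior C := zeroMemInt hconv hint hsymm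
  have h0C : (0 : EuclideanSpace ℝ (Fin n)) ∈ C := interior_subset h0
  -- 2 ∈ A via a maximal packing (Zorn)
  have hA2 : (2 : ℝ) ∈ A := by
    rw [hA, Set.mem_setOf_eq]
    obtain ⟨X, hXmax⟩ :=
      zorn_subset {X : Set (EuclideanSpace ℝ (Fin n)) | IsPacking C X} (by
        intro c hc hchain
        refine ⟨⋃₀ c, ?_, fun s hs => subset_sUnion_of_mem hs⟩
        intro x hx y hy hxy
        obtain ⟨s₁, hs₁, hxs₁⟩ := hx
        obtain ⟨s₂, hs₂, hys₂⟩ := hy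
        rcases hchain.total hs₁ hs₂ with h | h
        · exact hc hs₂ (h hxs₁) hys₂ hxy
        · exact hc hs₁ hxs₁ (h hys₂) hxy)
    have hX : IsPacking C X := hXmax.prop
    refine ⟨by norm_num, X, hX, ?_⟩
    rw [IsCovering, Set.eq_univ_iff_forall]
    intro y
    by_cases hyX : y ∈ X
    · exact Set.mem_iUnion₂.2 ⟨y, hyX, memAddSingleton.2 (by
        simpa using smul_mem_smul_set (a := (2:ℝ)) h0C)⟩
    · have hnp : ¬ IsPacking C (insert y X) := by
        intro hP
        exact hyX (hXmax.2 hP (Set.subset_insert y X) (Set.mem_insert y X))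
      rw [IsPacking, (haveI : Std.Symm (fun x y : EuclideanSpace ℝ (Fin n) =>
          Disjoint (interior (C + {x})) (interior (C + {y}))) := ⟨fun a b hab => hab.symm⟩
        Set.pairwise_insert_of_symm)] at hnp
      push_neg at hnp
      obtain ⟨b, hbX, hyb, hnd⟩ := hnp hX
      obtain ⟨p, hp1, hp2⟩ := Set.not_disjoint_iff.1 hnd
      rw [intAddSingleton, memAddSingleton] at hp1 hp2
      have h1 : p - y ∈ C := interior_subset hp1
      have h2 : p - b ∈ C := interior_subset hp2
      have h3 : -(p - y) ∈ C := by rw [hsymm]; exact Set.neg_mem_neg.2 h1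
      have h4 : y - b ∈ (2:ℝ) • C := by
        rw [twoSmul hconv]
        have hcal : y - b = (p - b) + -(p - y) := by abel
        rw [hcal]
        exact Set.add_mem_add h2 h3
      exact Set.mem_iUnion₂.2 ⟨b, hbX, memAddSingleton.2 h4⟩
  -- every element of A is at least 1
  have key0 : ∀ s ∈ A, (1 : ℝ) ≤ s := by
    intro s hs
    rw [hA, Set.mem_setOf_eq] at hs
    obtain ⟨hspos, X, hX, hcov⟩ := hs
    by_contra hs1
    push_neg at hs1
    haveI : Nontrivial (EuclideanSpace ℝ (Fin n)) := by
      refine nontrivial_of_ne (EuclideanSpace.single ⟨0, hn⟩ (1:ℝ)) 0 ?_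
      intro h
      have h2 := congrArg (fun w => w ⟨0, hn⟩) h
      rw [EuclideanSpace.single_apply] at h2
      simp at h2
    have hCne : C ≠ Set.univ := hcpt.ne_univ
    obtain ⟨v, hvC, hvni⟩ : ∃ v ∈ C, v ∉ interior C := by
      by_contra hno
      push_neg at hno
      have hCint : interior C = C := Subset.antisymm interior_subset hno
      have hopen : IsOpen C := hCint ▸ isOpen_interior
      exact hCne ((IsClopen.eq_univ ⟨hcpt.isClosed, hopen⟩) ⟨0, h0C⟩)
    have h0' : (0 : EuclideanSpace ℝ (Fin n)) ∈ ⋃ x ∈ X, ((s : ℝ) • C + {x}) := by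
      rw [hcov]; trivial
    obtain ⟨x₀, hx₀X, -⟩ := Set.mem_iUnion₂.1 h0'
    set t : ℝ := (s + 1) / 2 with htdef
    have hst : s < t := by rw [htdef]; linarith
    have ht1 : t < 1 := by rw [htdef]; linarith
    have htpos : 0 < t := lt_trans hspos hst
    set y : EuclideanSpace ℝ (Fin n) := x₀ + t • v with hydef
    have hy' : y ∈ ⋃ x ∈ X, ((s : ℝ) • C + {x}) := by rw [hcov]; trivial
    obtain ⟨x, hxX, hyx⟩ := Set.mem_iUnion₂.1 hy'
    have hzx : y - x ∈ (s : ℝ) • C := memAddSingleton.1 hyx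
    have hxx₀ : x ≠ x₀ := by
      rintro rfl
      have htv : t • v ∈ (s : ℝ) • C := by
        have hcal : y - x = t • v := by rw [hydef]; abel
        rwa [hcal] at hzx
      obtain ⟨c, hc, hcv⟩ := htv
      have hv' : v = (s / t) • c := by
        have h5 := congrArg (fun w => t⁻¹ • w) hcv
        simpa [smul_smul, inv_mul_cancel₀ (ne_of_gt htpos), div_eq_inv_mul] using h5.symm
      have : v ∈ interior C := by
        rw [hv']
        exact smulSubIntC hconv h0 (div_nonneg hspos.le htpos.le)
          ((div_lt_one htpos).2 hst) (smul_mem_smul_set hc)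
      exact hvni this
    have hy1 : y ∈ interior (C + {x}) := by
      rw [intAddSingleton, memAddSingleton]
      exact smulSubIntC hconv h0 hspos.le hs1 hzx
    have hy2 : y ∈ interior (C + {x₀}) := by
      rw [intAddSingleton, memAddSingleton]
      have hcal : y - x₀ = t • v := by rw [hydef]; abel
      rw [hcal]
      exact smulSubIntC hconv h0 htpos.le ht1 (smul_mem_smul_set hvC)
    exact Set.disjoint_left.1 (hX hxX hx₀X hxx₀) hy1 hy2
  -- every element of B + 1 is ≤ every element of A
  have key1 : ∀ r ∈ B, ∀ s ∈ A, r + 1 ≤ s := by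
    intro r hr s hsA
    rw [hB, Set.mem_setOf_eq] at hr
    obtain ⟨hrpos, hballs⟩ := hr
    by_contra hcon
    push_neg at hcon
    have hs1 : (1:ℝ) ≤ s := key0 s hsA
    rw [hA, Set.mem_setOf_eq] at hsA
    obtain ⟨hspos, X, hX, hcov⟩ := hsA
    obtain ⟨y, hy⟩ := hballs X hX
    have hy' : y ∈ ⋃ x ∈ X, ((s : ℝ) • C + {x}) := by rw [hcov]; trivial
    obtain ⟨x₀, hx₀X, hyx₀⟩ := Set.mem_iUnion₂.1 hy'
    obtain ⟨c, hc, hzc⟩ := memAddSingleton.1 hyx₀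
    have ha : (s - 1) • c ∈ interior (r • C) :=
      smulSubInt hconv h0 (t := s - 1) (r := r) (by linarith) (by linarith)
        (smul_mem_smul_set hc)
    have hp1 : y - (s - 1) • c ∈ interior (r • C + {y}) := by
      rw [intAddSingleton, memAddSingleton]
      have hcal : y - (s - 1) • c - y = -((s - 1) • c) := by abel
      rw [hcal, ← negIntSmul hsymm r]
      exact Set.neg_mem_neg.2 ha
    have hp2 : y - (s - 1) • c ∈ C + {x₀} := by
      rw [memAddSingleton]
      have hcal : y - (s - 1) • c - x₀ = (y - x₀) - (s - 1) • c := by abel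
      rw [hcal, ← hzc]
      have hcal2 : s • c - (s - 1) • c = c := by
        rw [← sub_smul]; norm_num
      rw [show (fun x => s • x) c = s • c from rfl, hcal2]
      exact hc
    exact Set.disjoint_left.1 (hy x₀ hx₀X) hp1 hp2
  -- if s > 1 and s - 1 ∉ B then s ∈ A
  have key2 : ∀ s : ℝ, 1 < s → (s - 1) ∉ B → s ∈ A := by
    intro s hs1 hnB
    rw [hA, Set.mem_setOf_eq]
    refine ⟨by linarith, ?_⟩
    rw [hB, Set.mem_setOf_eq] at hnB
    push_neg at hnB
    obtain ⟨X, hX, hall⟩ := hnB (by linarith)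
    refine ⟨X, hX, ?_⟩
    rw [IsCovering, Set.eq_univ_iff_forall]
    intro y
    obtain ⟨x, hxX, hnd⟩ := hall y
    obtain ⟨p, hp1, hp2⟩ := Set.not_disjoint_iff.1 hnd
    rw [intAddSingleton, memAddSingleton] at hp1
    rw [memAddSingleton] at hp2
    have ha : p - y ∈ (s - 1) • C := interior_subset hp1
    have hna : -(p - y) ∈ (s - 1) • C := by
      rw [negSmulSet hsymm (s-1)]
      exact Set.neg_mem_neg.2 ha
    have hyx : y - x ∈ (s : ℝ) • C := by
      have hsplit : (s : ℝ) • C = C + (s - 1) • C := by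
        have h6 := hconv.add_smul (p := (1:ℝ)) (q := s - 1) zero_le_one (by linarith)
        have h7 : (1 : ℝ) + (s - 1) = s := by ring
        rw [h7, one_smul] at h6
        exact h6
      rw [hsplit]
      have hcal : y - x = (p - x) + -(p - y) := by abel
      rw [hcal]
      exact Set.add_mem_add hp2 hna
    exact Set.mem_iUnion₂.2 ⟨x, hxX, memAddSingleton.2 hyx⟩
  -- assemble
  have hAne : A.Nonempty := ⟨2, hA2⟩
  have hAbdd : BddBelow A := ⟨0, fun r hr => hr.1.le⟩
  have hBbdd : BddAbove B := ⟨1, fun r hr => by have := key1 r hr 2 hA2; linarith⟩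
  have hr0 : 0 ≤ sSup B := Real.sSup_nonneg (fun r hr => hr.1.le)
  have hg1 : (1 : ℝ) ≤ sInf A := le_csInf hAne key0
  apply le_antisymm
  · apply le_of_forall_pos_le_add
    intro e he
    have hnB : sSup B + e ∉ B := by
      intro h
      have := le_csSup hBbdd h
      linarith
    have hmem : sSup B + 1 + e ∈ A := by
      have h1 : (1:ℝ) < sSup B + 1 + e := by linarith
      have h2 : sSup B + 1 + e - 1 = sSup B + e := by ring
      exact key2 _ h1 (by rw [h2]; exact hnB)
    have := csInf_le hAbdd hmem
    linarith
  · rcases B.eq_empty_or_nonempty with hBe | hBne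
    · rw [hBe, Real.sSup_empty]
      linarith
    · have hle : sSup B ≤ sInf A - 1 := by
        apply csSup_le hBne
        intro r hr
        have := le_csInf hAne (fun s hs => key1 r hr s hs)
        linarith
      linarith
end
end

section
/- For every point x on the boundary of a two-dimensional centrally symmetric convex domain C, there exist points x₂, x₃, x₄, x₅, x₆ on the boundary of C such that x, x₂, x₃, x₄, x₅, x₆ are the six vertices (in order) of an affinely regular hexagon inscribed in C. -/
open Set

/-- For every boundary point `x` of a two-dimensional centrally symmetric convex domain `C`
there are five further boundary points `x₂, …, x₆` such that `x, x₂, x₃, x₄, x₅, x₆` are the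
six vertices (in order) of an affinely regular hexagon inscribed in `C`; i.e.
`x₃ = x₂ - x`, `x₄ = -x`, `x₅ = -x₂`, `x₆ = -x₃`, and the hexagon is nondegenerate. -/
theorem inscribed_affinely_regular_hexagon (C : Set (ℝ × ℝ)) (hcpt : IsCompact C)
    (hconv : Convex ℝ C) (hint : (interior C).Nonempty) (hsymm : C = -C)
    (x : ℝ × ℝ) (hx : x ∈ frontier C) :
    ∃ x₂ x₃ x₄ x₅ x₆ : ℝ × ℝ,
      x₂ ∈ frontier C ∧ x₃ ∈ frontier C ∧ x₄ ∈ frontier C ∧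
      x₅ ∈ frontier C ∧ x₆ ∈ frontier C ∧
      x₃ = x₂ - x ∧ x₄ = -x ∧ x₅ = -x₂ ∧ x₆ = -x₃ ∧
      LinearIndependent ℝ ![x, x₂] := by
  -- 0 is an interior point
  obtain ⟨y, hy⟩ := hint
  have hny : -y ∈ interior C := by
    have hsub : -(interior C) ⊆ C := fun z hz => by
      rw [hsymm, Set.mem_neg]; exact interior_subset (Set.mem_neg.1 hz)
    exact interior_maximal hsub isOpen_interior.neg (Set.neg_mem_neg.2 hy)
  have h0 : (0 : ℝ × ℝ) ∈ interior C := by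
    have := hconv.interior hy hny (by norm_num : (0:ℝ) ≤ 1/2)
      (by norm_num : (0:ℝ) ≤ 1/2) (by norm_num)
    simpa [smul_neg, add_neg_cancel] using this
  have hnhds : C ∈ nhds (0 : ℝ × ℝ) := mem_interior_iff_mem_nhds.1 h0
  have habs : Absorbent ℝ C := absorbent_nhds_zero hnhds
  have hbdd : Bornology.IsVonNBounded ℝ C := hcpt.totallyBounded.isVonNBounded ℝ
  have hsym' : ∀ z ∈ C, -z ∈ C := fun z hz => by
    rw [hsymm, Set.mem_neg, neg_neg]; exact hz
  have gfront : ∀ z : ℝ × ℝ, gauge C z = 1 ↔ z ∈ frontier C := fun z =>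
    gauge_eq_one_iff_mem_frontier hconv hnhds
  have gneg : ∀ z : ℝ × ℝ, gauge C (-z) = gauge C z := gauge_neg hsym'
  have hgx : gauge C x = 1 := (gfront x).2 hx
  have hxne : x ≠ 0 := by
    intro h; rw [h, gauge_zero] at hgx; norm_num at hgx
  -- rotation path
  set R : ℝ → ℝ × ℝ := fun t =>
    (Real.cos (Real.pi * t) * x.1 - Real.sin (Real.pi * t) * x.2,
     Real.sin (Real.pi * t) * x.1 + Real.cos (Real.pi * t) * x.2) with hR
  have hRcont : Continuous R := by fun_prop
  have hRne : ∀ t, R t ≠ 0 := by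
    intro t h
    apply hxne
    have h1 : (R t).1 = 0 := by rw [h]; rfl
    have h2 : (R t).2 = 0 := by rw [h]; rfl
    simp only [hR] at h1 h2
    have hsc := Real.sin_sq_add_cos_sq (Real.pi * t)
    have hx1 : x.1 = 0 := by nlinarith [sq_nonneg x.1, sq_nonneg x.2]
    have hx2 : x.2 = 0 := by nlinarith [sq_nonneg x.1, sq_nonneg x.2]
    exact Prod.ext hx1 hx2
  have gpos : ∀ t, 0 < gauge C (R t) := fun t => (gauge_pos habs hbdd).2 (hRne t)
  set q : ℝ → ℝ × ℝ := fun t => (gauge C (R t))⁻¹ • R t with hq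
  have hgq : ∀ t, gauge C (q t) = 1 := by
    intro t
    rw [hq]
    rw [gauge_smul_of_nonneg (inv_nonneg.2 (gpos t).le), smul_eq_mul,
      inv_mul_cancel₀ (gpos t).ne']
  set f : ℝ → ℝ := fun t => gauge C (q t - x) with hf
  have hgc : Continuous (gauge C) := continuous_gauge hconv hnhds
  have hfc : Continuous f := by
    apply hgc.comp
    exact (((hgc.comp hRcont).inv₀ fun t => (gpos t).ne').smul hRcont).sub continuous_const
  have hf0 : f 0 = 0 := by
    have hR0 : R 0 = x := by simp [hR]
    simp [hf, hq, hR0, hgx, gauge_zero]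
  have hf1 : f 1 = 2 := by
    have hR1 : R 1 = -x := by
      simp only [hR, mul_one, Real.cos_pi, Real.sin_pi]
      ext <;> simp
    have hgnx : gauge C (-x) = 1 := by rw [gneg]; exact hgx
    have h2 : (-x - x : ℝ × ℝ) = -((2:ℝ) • x) := by
      rw [two_smul]; abel
    simp only [hf, hq, hR1, hgnx, inv_one, one_smul, h2, gneg,
      gauge_smul_of_nonneg (by norm_num : (0:ℝ) ≤ 2), hgx, smul_eq_mul, mul_one]
  -- intermediate value
  have h1mem : (1:ℝ) ∈ Icc (f 0) (f 1) := by rw [hf0, hf1]; norm_num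
  obtain ⟨t, _, hft⟩ := intermediate_value_Icc (by norm_num : (0:ℝ) ≤ 1) hfc.continuousOn h1mem
  set x₂ := q t with hx₂
  have hg2 : gauge C x₂ = 1 := hgq t
  have hg3 : gauge C (x₂ - x) = 1 := hft
  have hfr2 : x₂ ∈ frontier C := (gfront x₂).1 hg2
  have hfr3 : x₂ - x ∈ frontier C := (gfront _).1 hg3
  have hfrneg : ∀ z : ℝ × ℝ, z ∈ frontier C → -z ∈ frontier C := by
    intro z hz
    exact (gfront _).1 (by rw [gneg]; exact (gfront z).2 hz)
  refine ⟨x₂, x₂ - x, -x, -x₂, -(x₂ - x), hfr2, hfr3, hfrneg _ hx, hfrneg _ hfr2,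
    hfrneg _ hfr3, rfl, rfl, rfl, rfl, ?_⟩
  rw [linearIndependent_fin2]
  constructor
  · show x₂ ≠ 0
    intro h; rw [h, gauge_zero] at hg2; norm_num at hg2
  · intro a ha
    simp only [Matrix.cons_val_one, Matrix.head_cons, Matrix.cons_val_zero] at ha
    -- ha : a • x₂ = x
    rcases le_or_gt 0 a with hle | hlt
    · have : gauge C (a • x₂) = a := by
        rw [gauge_smul_of_nonneg hle, smul_eq_mul, hg2, mul_one]
      rw [ha, hgx] at this
      rw [← this, one_smul] at ha
      rw [ha] at hg3
      simp [gauge_zero] at hg3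
    · have : gauge C (a • x₂) = -a := by
        rw [show a • x₂ = -((-a) • x₂) by rw [neg_smul, neg_neg],
          gneg, gauge_smul_of_nonneg (by linarith), smul_eq_mul, hg2, mul_one]
      rw [ha, hgx] at this
      have haeq : a = -1 := by linarith
      rw [haeq] at ha
      have hx2eq : x₂ = -x := by
        have := congrArg (fun z => (-1:ℝ) • z) ha
        simpa [neg_smul, one_smul, smul_smul] using this
      rw [hx2eq] at hg3
      have h2 : (-x - x : ℝ × ℝ) = -((2:ℝ) • x) := by rw [two_smul]; abel
      rw [h2, gneg, gauge_smul_of_nonneg (by norm_num : (0:ℝ) ≤ 2), hgx] at hg3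
      norm_num at hg3
end

section
/- Let α = 2(2−√2). For all κ with α ≤ κ ≤ √2 and all λ with 1 ≤ λ ≤ α satisfying (4−3λ)/λ ≥ (α−1)/(1−½ακ), one has (4α/κ)·((α−1)/(κ−1) + 2α/κ + (4−3λ)/λ)⁻¹ ≤ α, with equality if and only if κ = 2/(3−√2) and λ = (2+4√2)/7. -/
set_option maxHeartbeats 4000000 in
/-- The key inequality in the proof of the optimal simultaneous packing-covering
bound, with its equality case. -/
theorem key_inequality (κ lam : ℝ) (α : ℝ) (hα : α = 2 * (2 - Real.sqrt 2))
    (hκ1 : α ≤ κ) (hκ2 : κ ≤ Real.sqrt 2) (hl1 : 1 ≤ lam) (hl2 : lam ≤ α)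
    (hcon : (4 - 3 * lam) / lam ≥ (α - 1) / (1 - (1 / 2) * α * κ)) :
    (4 * α / κ) * ((α - 1) / (κ - 1) + 2 * α / κ + (4 - 3 * lam) / lam)⁻¹ ≤ α ∧
    ((4 * α / κ) * ((α - 1) / (κ - 1) + 2 * α / κ + (4 - 3 * lam) / lam)⁻¹ = α ↔
      κ = 2 / (3 - Real.sqrt 2) ∧ lam = (2 + 4 * Real.sqrt 2) / 7) := by
  subst hα
  have hs0 : (0:ℝ) < Real.sqrt 2 := Real.sqrt_pos.mpr (by norm_num)
  have hs : Real.sqrt 2 ^ 2 = 2 := Real.sq_sqrt (by norm_num)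
  generalize hq : Real.sqrt 2 = s at hs0 hs hκ1 hκ2 hl2 hcon ⊢
  have hlb : (1.414:ℝ) < s := by nlinarith
  have hub : s < 1.415 := by nlinarith
  have hκ0 : 0 < κ := by nlinarith
  have hκ1' : 1 < κ := by nlinarith
  have hd1 : 0 < κ - 1 := by linarith
  have hd2 : 0 < 1 - 1 / 2 * (2 * (2 - s)) * κ := by nlinarith
  have hlam0 : 0 < lam := by linarith
  have hC0 : 0 < 4 - 3 * lam := by nlinarith
  have hα0 : 0 < 2 * (2 - s) := by nlinarith
  have hα1 : 0 < 2 * (2 - s) - 1 := by nlinarith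
  -- key polynomial inequality
  have key2 : (4 - 2 * (2 * (2 - s))) / κ ≤
      (2 * (2 - s) - 1) / (κ - 1) + (2 * (2 - s) - 1) / (1 - 1 / 2 * (2 * (2 - s)) * κ) := by
    rw [div_add_div _ _ hd1.ne' hd2.ne', div_le_div_iff₀ hκ0 (mul_pos hd1 hd2)]
    nlinarith [mul_nonneg (show (0:ℝ) ≤ 17 * s - 23 by nlinarith) (sq_nonneg (7 * κ - 6 - 2 * s)), hs]
  have e : (4:ℝ) / κ = (4 - 2 * (2 * (2 - s))) / κ + 2 * (2 * (2 - s)) / κ := by ring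
  have hD4 : 4 / κ ≤ (2 * (2 - s) - 1) / (κ - 1) + 2 * (2 * (2 - s)) / κ + (4 - 3 * lam) / lam := by
    linarith
  have hDpos : 0 < (2 * (2 - s) - 1) / (κ - 1) + 2 * (2 * (2 - s)) / κ + (4 - 3 * lam) / lam := by
    have h4 : 0 < 4 / κ := by positivity
    linarith
  have hmain : (4 * (2 * (2 - s)) / κ) *
      ((2 * (2 - s) - 1) / (κ - 1) + 2 * (2 * (2 - s)) / κ + (4 - 3 * lam) / lam)⁻¹ ≤ 2 * (2 - s) := by
    rw [← div_eq_mul_inv, div_le_iff₀ hDpos]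
    have h := mul_le_mul_of_nonneg_left hD4 hα0.le
    have e2 : 2 * (2 - s) * (4 / κ) = 4 * (2 * (2 - s)) / κ := by ring
    linarith
  refine ⟨hmain, ?_, ?_⟩
  · -- forward direction
    intro hE
    have h1 : (4 * (2 * (2 - s)) / κ) *
        ((2 * (2 - s) - 1) / (κ - 1) + 2 * (2 * (2 - s)) / κ + (4 - 3 * lam) / lam)⁻¹ *
        ((2 * (2 - s) - 1) / (κ - 1) + 2 * (2 * (2 - s)) / κ + (4 - 3 * lam) / lam) =
        2 * (2 - s) *
        ((2 * (2 - s) - 1) / (κ - 1) + 2 * (2 * (2 - s)) / κ + (4 - 3 * lam) / lam) := by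
      rw [hE]
    rw [mul_assoc, inv_mul_cancel₀ hDpos.ne', mul_one] at h1
    have hDeq : (2 * (2 - s) - 1) / (κ - 1) + 2 * (2 * (2 - s)) / κ + (4 - 3 * lam) / lam
        = 4 / κ := by
      have h2 : 2 * (2 - s) *
          ((2 * (2 - s) - 1) / (κ - 1) + 2 * (2 * (2 - s)) / κ + (4 - 3 * lam) / lam) =
          2 * (2 - s) * (4 / κ) := by rw [← h1]; ring
      exact mul_left_cancel₀ hα0.ne' h2
    have hCeq : (4 - 3 * lam) / lam = (2 * (2 - s) - 1) / (1 - 1 / 2 * (2 * (2 - s)) * κ) := by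
      linarith [hcon]
    have hAG : (4 - 2 * (2 * (2 - s))) / κ =
        (2 * (2 - s) - 1) / (κ - 1) + (2 * (2 - s) - 1) / (1 - 1 / 2 * (2 * (2 - s)) * κ) := by
      linarith
    rw [div_add_div _ _ hd1.ne' hd2.ne', div_eq_div_iff hκ0.ne' (mul_pos hd1 hd2).ne'] at hAG
    have hκv : 7 * κ - 6 - 2 * s = 0 := by
      have hsq : (7 * κ - 6 - 2 * s) ^ 2 ≤ 0 := by
        nlinarith [hAG, hs, show (0:ℝ) < 17 * s - 23 by nlinarith]
      nlinarith [sq_nonneg (7 * κ - 6 - 2 * s)]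
    have hκfin : κ = 2 / (3 - s) := by
      rw [eq_div_iff (by nlinarith : (3:ℝ) - s ≠ 0)]
      linear_combination ((3 - s) / 7) * hκv - (2 / 7) * hs
    refine ⟨hκfin, ?_⟩
    rw [div_eq_div_iff hlam0.ne' hd2.ne'] at hCeq
    have hlv : lam * (18 - 8 * s) = 8 * s - 4 := by
      linear_combination (-7) * hCeq + (-(2 - s) * (4 - 3 * lam)) * hκv + (2 * (4 - 3 * lam)) * hs
    have h18 : (0:ℝ) < 18 - 8 * s := by nlinarith
    rw [eq_div_iff (by norm_num : (7:ℝ) ≠ 0)]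
    have h7 : (lam * 7 - (2 + 4 * s)) * (18 - 8 * s) = 0 := by
      linear_combination 7 * hlv + 32 * hs
    rcases mul_eq_zero.mp h7 with h | h
    · linarith
    · linarith
  · -- reverse direction
    rintro ⟨hkv, hlv⟩
    subst hkv hlv
    have h3s : (0:ℝ) < 3 - s := by nlinarith
    have hs1 : (0:ℝ) < s - 1 := by nlinarith
    have hs3 : s ^ 3 = 2 * s := by rw [pow_succ, hs]
    have hs4 : s ^ 4 = 4 := by nlinarith [hs]
    have hs5 : s ^ 5 = 4 * s := by nlinarith [hs, hs3]
    have h62 : (0:ℝ) < 6 - 2 * s := by nlinarith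
    have hDval : (2 * (2 - s) - 1) / (2 / (3 - s) - 1) + 2 * (2 * (2 - s)) / (2 / (3 - s))
        + (4 - 3 * ((2 + 4 * s) / 7)) / ((2 + 4 * s) / 7) = 6 - 2 * s := by
      have h1 : 2 / (3 - s) - 1 = (s - 1) / (3 - s) := by
        rw [eq_div_iff h3s.ne', sub_mul, div_mul_cancel₀ _ h3s.ne']
        ring
      rw [h1]
      rw [div_div_eq_mul_div, div_div_eq_mul_div]
      field_simp
      ring_nf
      linarith [hs, hs3, hs4, hs5]
    rw [hDval, ← div_eq_mul_inv, div_eq_iff h62.ne']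
    field_simp
    try ring_nf
    try linarith [hs, hs3, hs4, hs5]
end

section
/- With u₂ = (√3κ/(4α), κ(α−1)/(4(κ−1)α) + 1/2) and the line through v₂ = (√3/2, 1/2) and m₁* = (√3κ/2, 0) given by y = (x − (√3/2)κ)/(√3(1−κ)), the intersection u₂⋆ of the line through the origin and u₂ with this line has x-coordinate √3κ²/(2α(3κ−2)), and hence ‖u₂⋆‖/‖u₂‖ = 2κ/(3κ−2). -/
/-- Coordinate computation for (15): with `u₂ = (√3κ/(4α), κ(α−1)/(4(κ−1)α) + 1/2)`,
the intersection `u₂⋆` of the line through the origin and `u₂` with the line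
`y = (x − (√3/2)κ)/(√3(1−κ))` has x-coordinate `√3κ²/(2α(3κ−2))`, and
`‖u₂⋆‖/‖u₂‖ = 2κ/(3κ−2)`. -/
theorem u2star2_ratio (κ α : ℝ) (hκ : 1 < κ) (hα : 0 < α) :
    ∃ u₂star : ℝ × ℝ, (∃ c : ℝ, 0 < c ∧
        u₂star = c • ((Real.sqrt 3 * κ / (4 * α),
          κ * (α - 1) / (4 * (κ - 1) * α) + 1 / 2) : ℝ × ℝ)) ∧
      u₂star.2 = (u₂star.1 - Real.sqrt 3 / 2 * κ) / (Real.sqrt 3 * (1 - κ)) ∧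
      u₂star.1 = Real.sqrt 3 * κ ^ 2 / (2 * α * (3 * κ - 2)) ∧
      ‖u₂star‖ / ‖((Real.sqrt 3 * κ / (4 * α),
          κ * (α - 1) / (4 * (κ - 1) * α) + 1 / 2) : ℝ × ℝ)‖ = 2 * κ / (3 * κ - 2) := by
  have hs : Real.sqrt 3 > 0 := Real.sqrt_pos.mpr (by norm_num)
  have hs2 : Real.sqrt 3 ^ 2 = 3 := Real.sq_sqrt (by norm_num)
  set s := Real.sqrt 3 with hsdef
  have h3pos : (0:ℝ) < 3 * κ - 2 := by nlinarith
  have hc : (0:ℝ) < 2 * κ / (3 * κ - 2) := div_pos (by nlinarith) h3pos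
  have h3κ : (3 * κ - 2) ≠ 0 := by nlinarith
  have hκ1 : (κ - 1) ≠ 0 := by nlinarith
  have h1κ : (1 - κ) ≠ 0 := by nlinarith
  have hα' : α ≠ 0 := ne_of_gt hα
  have hsne : s ≠ 0 := ne_of_gt hs
  set u₂ : ℝ × ℝ := (s * κ / (4 * α), κ * (α - 1) / (4 * (κ - 1) * α) + 1 / 2) with hu₂
  refine ⟨(2 * κ / (3 * κ - 2)) • u₂, ⟨_, hc, rfl⟩, ?_, ?_, ?_⟩
  · show (2 * κ / (3 * κ - 2)) * u₂.2 = ((2 * κ / (3 * κ - 2)) * u₂.1 - s / 2 * κ) / (s * (1 - κ))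
    simp only [hu₂]
    field_simp
    have h3κ' : κ * 3 - 2 ≠ 0 := by linarith
    field_simp
    ring
  · show (2 * κ / (3 * κ - 2)) * u₂.1 = s * κ ^ 2 / (2 * α * (3 * κ - 2))
    simp only [hu₂]
    field_simp
    ring
  · have hu₂ne : ‖u₂‖ ≠ 0 := by
      simp only [norm_ne_zero_iff]
      intro h
      have h1 : u₂.1 = 0 := by rw [h]; rfl
      simp only [hu₂] at h1
      have : s * κ ≠ 0 := by positivity
      field_simp at h1
      rw [mul_zero] at h1
      exact this h1
    rw [norm_smul, Real.norm_eq_abs, abs_of_pos hc, mul_div_assoc,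
      div_self hu₂ne, mul_one]
end
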